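/- Rank-k mixed update/downdate with equal counts: In the mixed setting with k_u = k_d = k (so n₂ = n₁ = n), setting z = (x̄₁ + x̄₂)/2, K_u = Y_u − z·1ₖᵀ, and K_d = Y_d − z·1ₖᵀ, one has (n−1)·S₂ = (n−1)·S₁ + K_uK_uᵀ − K_dK_dᵀ. -/

import Mathlib

open Matrix

/-- Sample covariance (with Bessel's correction) of an m×N data matrix. -/
noncomputable def sampleCov {m : ℕ} {ι : Type*} [Fintype ι]
    (Z : Matrix (Fin m) ι ℝ) : Matrix (Fin m) (Fin m) ℝ :=
  ((Fintype.card ι : ℝ) - 1)⁻¹ •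
    ((Matrix.of fun i j => Z i j - (∑ l, Z i l) / (Fintype.card ι : ℝ)) *
      (Matrix.of fun i j => Z i j - (∑ l, Z i l) / (Fintype.card ι : ℝ))ᵀ)

lemma sum_compl_subtype' {n : ℕ} (J : Finset (Fin n)) (f : Fin n → ℝ) :
    ∑ j : {j // j ∉ J}, f j = ∑ j, f j - ∑ j ∈ J, f j := by
  have h : ∑ j ∈ Jᶜ, f j = ∑ j : {j // j ∉ J}, f j :=
    Finset.sum_subtype Jᶜ (fun x => Finset.mem_compl) f
  rw [← h, ← Finset.sum_compl_add_sum J f]; ring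

lemma sum_mem_subtype' {n : ℕ} (J : Finset (Fin n)) (f : Fin n → ℝ) :
    ∑ j : {j // j ∈ J}, f j = ∑ j ∈ J, f j :=
  (Finset.sum_subtype J (fun _ => Iff.rfl) f).symm

lemma key_expand {ι : Type*} [Fintype ι] (f g : ι → ℝ) (c c' : ℝ) :
    ∑ j, (f j - c) * (g j - c') =
      ∑ j, f j * g j - c * ∑ j, g j - c' * ∑ j, f j + (Fintype.card ι) * (c * c') := by
  simp only [sub_mul, mul_sub, Finset.sum_sub_distrib, Finset.mul_sum, Finset.sum_mul,
    Finset.sum_const, Finset.card_univ, nsmul_eq_mul, mul_comm]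
  ring

/-- Rank-k mixed update/downdate with equal numbers of added and removed
columns, using z = (x̄₁ + x̄₂)/2. -/
theorem rank_k_mixed_update_downdate_equal_counts {m n k : ℕ}
    (hn : 2 ≤ n) (hk : k < n)
    (X₁ : Matrix (Fin m) (Fin n) ℝ) (J : Finset (Fin n)) (hJ : J.card = k)
    (Yd : Matrix (Fin m) {j // j ∈ J} ℝ) (hYd : Yd = X₁.submatrix id Subtype.val)
    (Yu : Matrix (Fin m) (Fin k) ℝ)
    (X₂ : Matrix (Fin m) ({j // j ∉ J} ⊕ Fin k) ℝ)
    (hX₂ : X₂ = Matrix.fromCols (X₁.submatrix id Subtype.val) Yu)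
    (xbar₁ xbar₂ : Fin m → ℝ)
    (hxbar₁ : ∀ i, xbar₁ i = (∑ j, X₁ i j) / (n : ℝ))
    (hxbar₂ : ∀ i, xbar₂ i = (∑ j, X₂ i j) / (n : ℝ))
    (z : Fin m → ℝ) (hz : ∀ i, z i = (xbar₁ i + xbar₂ i) / 2)
    (Ku : Matrix (Fin m) (Fin k) ℝ) (hKu : Ku = Matrix.of fun i j => Yu i j - z i)
    (Kd : Matrix (Fin m) {j // j ∈ J} ℝ) (hKd : Kd = Matrix.of fun i j => Yd i j - z i) :
    ((n : ℝ) - 1) • sampleCov X₂ =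
      ((n : ℝ) - 1) • sampleCov X₁ + Ku * Kuᵀ - Kd * Kdᵀ := by
  have hcard1 : Fintype.card {j // j ∉ J} = n - k := by
    simp [Fintype.card_subtype, ← Finset.compl_filter, Finset.card_compl, hJ]
  have hcard : Fintype.card ({j // j ∉ J} ⊕ Fin k) = n := by
    simp [Fintype.card_sum, hcard1]; omega
  have hcardJ : Fintype.card {j // j ∈ J} = k := by simp [hJ]
  have hn2 : (2:ℝ) ≤ (n:ℝ) := by exact_mod_cast hn
  have hn1 : (n:ℝ) - 1 ≠ 0 := by linarith
  have hn0 : (n:ℝ) ≠ 0 := by linarith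
  subst hYd hX₂ hKu hKd
  ext i i'
  simp only [sampleCov, hcard, hcardJ, Matrix.smul_apply, Matrix.add_apply, Matrix.sub_apply,
    Matrix.mul_apply, Matrix.transpose_apply, Matrix.of_apply, smul_eq_mul,
    Fintype.card_fin, ← mul_assoc, mul_inv_cancel₀ hn1, one_mul]
  rw [key_expand, key_expand, key_expand, key_expand]
  simp only [hcard, hcardJ, Fintype.card_fin, Fintype.sum_sum_type,
    Matrix.fromCols_apply_inl, Matrix.fromCols_apply_inr, Matrix.submatrix_apply,
    id_eq, sum_compl_subtype', sum_mem_subtype', hxbar₁, hxbar₂, hz]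
  rw [sum_compl_subtype' J (fun j => X₁ i j * X₁ i' j)]
  rw [sum_mem_subtype' J (fun j => X₁ i j * X₁ i' j)]
  field_simp
  ring
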